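/- arXiv:1508.00512 — 3 statements merged into one kernel-verified Lean document; each statement's English description precedes it below -/
import Mathlib

section
/- Let m ≥ 1 and let φ : ℤ/mℤ → ℂ. For any interval I ⊂ ℤ of cardinality at most m, the partial sum S(φ,I) = Σ_{n∈I} φ(n) satisfies |S(φ,I)| ≤ ‖φ̂‖_∞ · Σ_{h mod m} |1̂_Ĩ(h)| ≤ ‖φ̂‖_∞ · m^{1/2} · log(3m), where φ̂(h) = (1/√m) Σ_{x mod m} φ(x) e(hx/m) and 1̂_Ĩ is the normalized Fourier transform of the characteristic function of the image of I in ℤ/mℤ. -/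
open scoped BigOperators
open Finset

noncomputable def eAdd (m : ℕ) (t : ℤ) : ℂ := Complex.exp (2 * Real.pi * Complex.I * t / m)

noncomputable def dft (m : ℕ) (φ : ℤ → ℂ) (h : ℤ) : ℂ :=
  (1 / Real.sqrt m) * ∑ x ∈ Finset.range m, φ x * eAdd m (h * x)

noncomputable def supNorm (m : ℕ) (f : ℤ → ℂ) : ℝ :=
  (((Finset.range m).sup fun x => ‖f (x : ℤ)‖₊ : NNReal) : ℝ)

lemma eAdd_eq_zpow (m : ℕ) (t : ℤ) :
    eAdd m t = (Complex.exp (2 * Real.pi * Complex.I / m)) ^ t := by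
  rw [eAdd, ← Complex.exp_int_mul]; ring_nf

lemma exp_eq_one_iff_dvd (m : ℕ) (hm : 1 ≤ m) (d : ℤ) :
    Complex.exp (2 * Real.pi * Complex.I * d / m) = 1 ↔ (m : ℤ) ∣ d := by
  have hm0 : (m : ℂ) ≠ 0 := by exact_mod_cast Nat.cast_ne_zero.mpr (by omega)
  have hpi : (2 * Real.pi * Complex.I : ℂ) ≠ 0 := by
    simp [Real.pi_ne_zero, Complex.I_ne_zero]
  rw [Complex.exp_eq_one_iff]
  constructor
  · rintro ⟨n, hn⟩
    refine ⟨n, ?_⟩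
    have h2 : (2 * Real.pi * Complex.I : ℂ) * d = (2 * Real.pi * Complex.I) * (m * n) := by
      field_simp at hn
      linear_combination (2 * Real.pi * Complex.I) * hn
    have hd : (d : ℂ) = m * n := mul_left_cancel₀ hpi h2
    exact_mod_cast hd
  · rintro ⟨k, rfl⟩
    exact ⟨k, by field_simp; push_cast; ring⟩

lemma eAdd_add (m : ℕ) (s t : ℤ) : eAdd m (s + t) = eAdd m s * eAdd m t := by
  rw [eAdd, eAdd, eAdd, ← Complex.exp_add]
  congr 1
  push_cast
  ring

lemma eAdd_int_mul (m : ℕ) (h : ℕ) (d : ℤ) : eAdd m ((h : ℤ) * d) = (eAdd m d) ^ h := by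
  rw [eAdd_eq_zpow, eAdd_eq_zpow, mul_comm (h : ℤ) d, zpow_mul, zpow_natCast]

lemma orth (m : ℕ) (hm : 1 ≤ m) (d : ℤ) :
    ∑ h ∈ Finset.range m, eAdd m ((h : ℤ) * d) = if (m : ℤ) ∣ d then (m : ℂ) else 0 := by
  simp_rw [eAdd_int_mul]
  by_cases hd : (m : ℤ) ∣ d
  · have h1 : eAdd m d = 1 := (exp_eq_one_iff_dvd m hm d).mpr hd
    simp [h1, hd]
  · have h1 : eAdd m d ≠ 1 := fun c => hd ((exp_eq_one_iff_dvd m hm d).mp c)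
    rw [geom_sum_eq h1, if_neg hd]
    have hm1 : (eAdd m d) ^ m = 1 := by
      rw [← eAdd_int_mul]
      exact (exp_eq_one_iff_dvd m hm _).mpr ⟨d, rfl⟩
    rw [hm1, sub_self, zero_div]

lemma phi_emod (m : ℕ) (φ : ℤ → ℂ) (hper : ∀ n : ℤ, φ (n + m) = φ n) (n : ℤ) :
    φ (n % (m : ℤ)) = φ n := by
  have key : ∀ k : ℤ, ∀ n : ℤ, φ (n + k * m) = φ n := by
    intro k
    induction k using Int.induction_on with
    | zero => simp
    | succ i ih =>
      intro n
      have h1 : n + ((i : ℤ) + 1) * m = (n + i * m) + m := by ring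
      rw [h1, hper, ih]
    | pred i ih =>
      intro n
      have h1 : (n + (-(i : ℤ) - 1) * m) + m = n + (-(i : ℤ)) * m := by ring
      have := hper (n + (-(i : ℤ) - 1) * m)
      rw [h1, ih] at this
      rw [this]
  calc φ (n % m) = φ (n % m + (n / m) * m) := (key _ _).symm
    _ = φ n := by rw [Int.emod_add_ediv_mul]

lemma single_lemma (m : ℕ) (hm : 1 ≤ m) (φ : ℤ → ℂ) (hper : ∀ n : ℤ, φ (n + m) = φ n)
    (n : ℤ) :
    ∑ x ∈ Finset.range m, (φ x * if (m : ℤ) ∣ ((x : ℤ) - n) then 1 else 0) = φ n := by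
  have hm0 : (0 : ℤ) < m := by exact_mod_cast hm
  set x0 := (n % (m : ℤ)).toNat with hx0def
  have hx0m : (x0 : ℤ) = n % m := Int.toNat_of_nonneg (Int.emod_nonneg n (by omega))
  have hx0lt : x0 < m := by
    have := Int.emod_lt_of_pos n hm0
    omega
  rw [Finset.sum_eq_single x0]
  · have hdvd : (m : ℤ) ∣ ((x0 : ℤ) - n) := by
      refine ⟨-(n / m), ?_⟩
      have := Int.emod_add_mul_ediv n m
      rw [hx0m]
      linarith
    rw [if_pos hdvd, mul_one, hx0m, phi_emod m φ hper]
  · intro x hx hne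
    rw [if_neg, mul_zero]
    intro hdvd
    apply hne
    have hx' : (x : ℤ) % m = n % m :=
      Int.emod_eq_emod_iff_emod_sub_eq_zero.mpr (Int.emod_eq_zero_of_dvd hdvd)
    have hxlt : (x : ℤ) < m := by exact_mod_cast Finset.mem_range.mp hx
    have hxx : (x : ℤ) % m = x := Int.emod_eq_of_lt (by positivity) hxlt
    omega
  · intro h
    exact absurd (Finset.mem_range.mpr hx0lt) h

lemma inversion (m : ℕ) (hm : 1 ≤ m) (φ : ℤ → ℂ) (hper : ∀ n : ℤ, φ (n + m) = φ n)
    (a b : ℤ) :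
    ∑ n ∈ Finset.Icc a b, φ n
      = ∑ h ∈ Finset.range m,
          dft m φ h * ((1 / Real.sqrt m : ℂ) * ∑ n ∈ Finset.Icc a b, eAdd m (-((h : ℤ) * n))) := by
  have hmR : (0 : ℝ) < m := by exact_mod_cast hm
  have hmC : (m : ℂ) ≠ 0 := by exact_mod_cast ne_of_gt hmR
  set c : ℂ := (1 / Real.sqrt m : ℂ) with hc
  have hcc : c * c * (m : ℂ) = 1 := by
    have hs : Real.sqrt m * Real.sqrt m = m := Real.mul_self_sqrt hmR.le
    have hsC : ((Real.sqrt m : ℂ)) * ((Real.sqrt m : ℂ)) = (m : ℂ) := by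
      exact_mod_cast congrArg Complex.ofReal hs
    have hs0 : ((Real.sqrt m : ℂ)) ≠ 0 := by
      intro h0
      rw [h0, mul_zero] at hsC
      exact hmC hsC.symm
    rw [hc, div_mul_div_comm, one_mul, hsC]
    field_simp
  calc ∑ n ∈ Finset.Icc a b, φ n
      = ∑ n ∈ Finset.Icc a b, ∑ x ∈ Finset.range m,
          (φ x * if (m : ℤ) ∣ ((x : ℤ) - n) then 1 else 0) := by
        refine Finset.sum_congr rfl fun n _ => ?_
        rw [single_lemma m hm φ hper n]
    _ = ∑ n ∈ Finset.Icc a b, ∑ x ∈ Finset.range m,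
          ((c * c) * φ x * ∑ h ∈ Finset.range m, eAdd m ((h : ℤ) * ((x : ℤ) - n))) := by
        refine Finset.sum_congr rfl fun n _ => Finset.sum_congr rfl fun x _ => ?_
        rw [orth m hm]
        by_cases hd : (m : ℤ) ∣ ((x : ℤ) - n)
        · rw [if_pos hd, if_pos hd, mul_one]
          rw [mul_comm (c * c) (φ x), mul_assoc, hcc, mul_one]
        · rw [if_neg hd, if_neg hd, mul_zero, mul_zero]
    _ = ∑ h ∈ Finset.range m, ∑ x ∈ Finset.range m, ∑ n ∈ Finset.Icc a b,
          ((c * c) * φ x * eAdd m ((h : ℤ) * ((x : ℤ) - n))) := by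
        simp_rw [Finset.mul_sum]
        refine Eq.trans (Finset.sum_congr rfl fun n _ => Finset.sum_comm) ?_
        refine Eq.trans Finset.sum_comm ?_
        exact Finset.sum_congr rfl fun h _ => Finset.sum_comm
    _ = ∑ h ∈ Finset.range m,
          dft m φ h * (c * ∑ n ∈ Finset.Icc a b, eAdd m (-((h : ℤ) * n))) := by
        refine Finset.sum_congr rfl fun h _ => ?_
        rw [dft]
        simp only [Finset.mul_sum, Finset.sum_mul]
        refine Eq.trans Finset.sum_comm ?_
        refine Finset.sum_congr rfl fun n _ => Finset.sum_congr rfl fun x _ => ?_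
        rw [show (h : ℤ) * ((x : ℤ) - n) = (h : ℤ) * x + -((h : ℤ) * n) by ring, eAdd_add]
        ring

lemma sin_core (y : ℝ) (h0 : 0 ≤ y) (h1 : y ≤ Real.pi / 2) :
    y - y ^ 2 / Real.pi ≤ Real.sin y := by
  have hpi := Real.pi_gt_d6
  have hpi' := Real.pi_lt_d6
  have hπ0 : (0 : ℝ) < Real.pi := by linarith
  have hd : y ^ 2 / (22 / 7) ≤ y ^ 2 / Real.pi :=
    div_le_div_of_nonneg_left (sq_nonneg y) hπ0 (by linarith)
  rcases eq_or_lt_of_le h0 with h | h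
  · simp [← h]
  rcases le_or_gt y 1 with hy | hy
  · have h2 := Real.sin_gt_sub_cube h; have hy3 : 0 ≤ y ^ 3 := by positivity
    have hd2 : y ^ 2 / 4 ≤ y ^ 2 / (22 / 7) :=
      div_le_div_of_nonneg_left (sq_nonneg y) (by norm_num) (by norm_num)
    have hcube : y ^ 3 / 4 ≤ y ^ 2 / 4 := by nlinarith
    linarith
  · have h4 : 1 - (Real.pi / 2 - y) ^ 2 / 2 ≤ Real.cos (Real.pi / 2 - y) :=
      Real.one_sub_sq_div_two_le_cos
    rw [show Real.sin y = Real.cos (Real.pi / 2 - y) from (Real.cos_pi_div_two_sub y).symm]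
    have hsq : (Real.pi / 2 - y) ^ 2 ≤ ((22 / 7) / 2 - y) ^ 2 := by
      have ha : (0:ℝ) ≤ Real.pi / 2 - y := by linarith
      have hb : Real.pi / 2 - y ≤ (22 / 7) / 2 - y := by linarith
      exact pow_le_pow_left₀ ha hb 2
    have key : y - y ^ 2 / (22 / 7) ≤ 1 - ((22 / 7) / 2 - y) ^ 2 / 2 := by
      nlinarith [mul_nonneg (by linarith : (0:ℝ) ≤ y - 1)
        (by linarith : (0:ℝ) ≤ (22 / 7) / 2 - y)]
    linarith

lemma sin_pi_mul {x : ℝ} (h0 : 0 ≤ x) (h1 : x ≤ 1) :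
    Real.pi * x * (1 - x) ≤ Real.sin (Real.pi * x) := by
  have hπ0 : (0 : ℝ) < Real.pi := Real.pi_pos
  rcases le_or_gt x (1 / 2) with hx | hx
  · have hy := sin_core (Real.pi * x) (by positivity) (by nlinarith)
    have : Real.pi * x * (1 - x) = Real.pi * x - (Real.pi * x) ^ 2 / Real.pi := by
      field_simp
    linarith [this ▸ hy]
  · have hy := sin_core (Real.pi * (1 - x)) (by nlinarith) (by nlinarith)
    have hs : Real.sin (Real.pi * (1 - x)) = Real.sin (Real.pi * x) := by
      rw [show Real.pi * (1 - x) = Real.pi - Real.pi * x by ring, Real.sin_pi_sub]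
    have heq : Real.pi * x * (1 - x)
        = Real.pi * (1 - x) - (Real.pi * (1 - x)) ^ 2 / Real.pi := by
      field_simp; ring
    rw [heq, ← hs]
    exact hy

lemma abs_exp_sub_one (θ : ℝ) :
     ‖Complex.exp ((θ : ℂ) * Complex.I) - 1‖ = 2 * |Real.sin (θ / 2)| := by
  have e1 : Complex.exp ((↑(θ/2) : ℂ) * Complex.I) * Complex.exp ((↑(θ/2) : ℂ) * Complex.I)
      = Complex.exp ((θ : ℂ) * Complex.I) := by
    rw [← Complex.exp_add]; congr 1; push_cast; ring
  have e2 : Complex.exp ((↑(θ/2) : ℂ) * Complex.I) * Complex.exp (-(↑(θ/2) : ℂ) * Complex.I)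
      = 1 := by
    rw [← Complex.exp_add, show ((↑(θ/2) : ℂ) * Complex.I + -(↑(θ/2) : ℂ) * Complex.I) = 0 by ring,
      Complex.exp_zero]
  have expand : Complex.exp ((θ : ℂ) * Complex.I) - 1
      = Complex.exp ((↑(θ/2) : ℂ) * Complex.I) * (2 * Complex.I * Complex.sin (↑(θ/2))) := by
    rw [Complex.sin]
    calc Complex.exp ((θ:ℂ) * Complex.I) - 1
        = (Complex.I * Complex.I) *
            (Complex.exp ((↑(θ/2) : ℂ) * Complex.I) * Complex.exp (-(↑(θ/2) : ℂ) * Complex.I)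
             - Complex.exp ((↑(θ/2) : ℂ) * Complex.I) * Complex.exp ((↑(θ/2) : ℂ) * Complex.I)) := by
          rw [e1, e2, Complex.I_mul_I]; ring
      _ = Complex.exp ((↑(θ/2) : ℂ) * Complex.I) *
            (2 * Complex.I * ((Complex.exp (-(↑(θ/2)) * Complex.I)
              - Complex.exp ((↑(θ/2)) * Complex.I)) * Complex.I / 2)) := by ring
  rw [expand, norm_mul, Complex.norm_exp_ofReal_mul_I, one_mul, norm_mul, norm_mul,
    Complex.norm_two, Complex.norm_I, mul_one, ← Complex.ofReal_sin, Complex.norm_real, Real.norm_eq_abs]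

lemma geom_abs (m : ℕ) (hm : 1 ≤ m) (h : ℕ) (hh0 : 0 < h) (hhm : h < m) (a b : ℤ) :
     ‖∑ x ∈ Finset.Icc a b, eAdd m ((h : ℤ) * x)‖
      ≤ 1 / Real.sin (Real.pi * h / m) := by
  have hmR : (0 : ℝ) < m := by exact_mod_cast hm
  have hsinpos : 0 < Real.sin (Real.pi * h / m) := by
    apply Real.sin_pos_of_pos_of_lt_pi
    · positivity
    · rw [div_lt_iff₀ hmR]
      have : (h : ℝ) < m := by exact_mod_cast hhm
      nlinarith [Real.pi_pos]
  set z : ℂ := eAdd m (h : ℤ) with hzdef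
  have hz0 : z ≠ 0 := Complex.exp_ne_zero _
  have hz1 : z ≠ 1 := by
    intro hc
    have := (exp_eq_one_iff_dvd m hm (h : ℤ)).mp hc
    have := Int.le_of_dvd (by exact_mod_cast hh0) this
    omega
  have hzx : ∀ x : ℤ, eAdd m ((h : ℤ) * x) = z ^ x := by
    intro x
    rw [hzdef, eAdd_eq_zpow, eAdd_eq_zpow, ← zpow_mul]
  have habsz : ‖z‖ = 1 := by
    rw [hzdef, eAdd, show (2 * (Real.pi : ℂ) * Complex.I * (((h : ℤ) : ℂ)) / (m : ℂ))
      = ((2 * Real.pi * h / m : ℝ) : ℂ) * Complex.I by push_cast; ring,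
      Complex.norm_exp_ofReal_mul_I]
  rcases le_or_gt a b with hab | hab
  swap
  · rw [Finset.Icc_eq_empty (by omega), Finset.sum_empty, norm_zero]
    positivity
  · set L : ℕ := (b + 1 - a).toNat with hLdef
    have key : ∑ x ∈ Finset.Icc a b, z ^ x = z ^ a * ∑ i ∈ Finset.range L, z ^ i := by
      rw [Finset.mul_sum]
      refine Finset.sum_nbij' (fun x => (x - a).toNat) (fun i => a + (i : ℤ)) ?_ ?_ ?_ ?_ ?_
      · intro x hx
        rw [Finset.mem_Icc] at hx
        rw [Finset.mem_range]
        omega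
      · intro i hi
        rw [Finset.mem_range] at hi
        rw [Finset.mem_Icc]
        omega
      · intro x hx; rw [Finset.mem_Icc] at hx; omega
      · intro i hi; rw [Finset.mem_range] at hi; omega
      · intro x hx
        rw [Finset.mem_Icc] at hx
        rw [← zpow_natCast z ((x - a).toNat), ← zpow_add₀ hz0]
        congr 1
        omega
    simp_rw [hzx]
    rw [key, norm_mul, geom_sum_eq hz1, norm_div]
    have habsa : ‖z ^ a‖ = 1 := by
      rw [norm_zpow, habsz, one_zpow]
    have hnum : ‖z ^ L - 1‖ ≤ 2 := by
      calc ‖z ^ L - 1‖ ≤ ‖z ^ L‖ + ‖(1 : ℂ)‖ := by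
            exact norm_sub_le _ _
        _ = 2 := by rw [norm_pow, habsz, one_pow, norm_one]; norm_num
    have hden : ‖z - 1‖ = 2 * Real.sin (Real.pi * h / m) := by
      have hθ : z = Complex.exp (((2 * Real.pi * h / m : ℝ) : ℂ) * Complex.I) := by
        rw [hzdef, eAdd]; congr 1; push_cast; ring
      rw [hθ, abs_exp_sub_one]
      rw [show (2 * Real.pi * h / m) / 2 = Real.pi * h / m by ring]
      rw [abs_of_pos hsinpos]
    rw [habsa, one_mul, hden]
    rw [div_le_div_iff₀ (by linarith) hsinpos]
    calc ‖z ^ L - 1‖ * Real.sin (Real.pi * h / m)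
        ≤ 2 * Real.sin (Real.pi * h / m) :=
          mul_le_mul_of_nonneg_right hnum hsinpos.le
      _ = 1 * (2 * Real.sin (Real.pi * h / m)) := by ring

lemma harm_bound (m : ℕ) (hm : 1 ≤ m) :
    ∑ h ∈ Finset.Ico 1 m, (1 : ℝ) / h ≤ 1 + Real.log m := by
  have h1 : ∑ h ∈ Finset.Ico 1 m, (1 : ℝ) / h = ((harmonic (m - 1) : ℚ) : ℝ) := by
    rw [harmonic_eq_sum_Icc]
    rw [show Finset.Ico 1 m = Finset.Icc 1 (m - 1) by
      rw [← Finset.Ico_add_one_right_eq_Icc]; congr 1; omega]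
    push_cast
    simp [one_div]
  rw [h1]
  calc ((harmonic (m - 1) : ℚ) : ℝ) ≤ 1 + Real.log (m - 1 : ℕ) := harmonic_le_one_add_log _
    _ ≤ 1 + Real.log m := by
      rcases eq_or_lt_of_le hm with h | h
      · rw [← h]; norm_num
      · have h0 : (0 : ℝ) < ((m - 1 : ℕ) : ℝ) := by
          have : 0 < m - 1 := by omega
          exact_mod_cast this
        have hle : ((m - 1 : ℕ) : ℝ) ≤ (m : ℝ) := by
          have : m - 1 ≤ m := Nat.sub_le m 1
          exact_mod_cast this
        have := Real.log_le_log h0 hle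
        linarith

lemma sum_reflect (m : ℕ) :
    ∑ h ∈ Finset.Ico 1 m, (m : ℝ) / ((m : ℝ) - (h : ℝ))
      = ∑ h ∈ Finset.Ico 1 m, (m : ℝ) / h := by
  refine Finset.sum_nbij' (fun h => m - h) (fun h => m - h) ?_ ?_ ?_ ?_ ?_
  · intro h hh; rw [Finset.mem_Ico] at *; omega
  · intro h hh; rw [Finset.mem_Ico] at *; omega
  · intro h hh; rw [Finset.mem_Ico] at hh; omega
  · intro h hh; rw [Finset.mem_Ico] at hh; omega
  · intro h hh; rw [Finset.mem_Ico] at hh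
    congr 1
    have : ((m - h : ℕ) : ℝ) = (m : ℝ) - h := by
      have : h ≤ m := by omega
      push_cast [Nat.cast_sub this]
      ring
    rw [this]

lemma final_numeric (m : ℕ) (hm : 1 ≤ m) :
    (m : ℝ) + (2 * m / Real.pi) * (∑ h ∈ Finset.Ico 1 m, (1 : ℝ) / h)
      ≤ m * Real.log (3 * m) := by
  have hπl := Real.pi_gt_d6
  have hπu := Real.pi_lt_d6
  have hπ0 : (0 : ℝ) < Real.pi := by linarith
  have hl2 := Real.log_two_gt_d9
  have hl3 : (1.0397 : ℝ) ≤ Real.log 3 := by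
    have h89 : Real.log 8 ≤ Real.log 9 := Real.log_le_log (by norm_num) (by norm_num)
    have h8 : Real.log 8 = 3 * Real.log 2 := by
      rw [show (8 : ℝ) = 2 ^ 3 by norm_num, Real.log_pow]; push_cast; ring
    have h9 : Real.log 9 = 2 * Real.log 3 := by
      rw [show (9 : ℝ) = 3 ^ 2 by norm_num, Real.log_pow]; push_cast; ring
    nlinarith
  have hmR : (0 : ℝ) < m := by exact_mod_cast hm
  have hlog3m : Real.log (3 * m) = Real.log 3 + Real.log m := by
    rw [Real.log_mul (by norm_num) (ne_of_gt hmR)]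
  have hinv : 2 / Real.pi ≤ 0.6367 := by
    rw [div_le_iff₀ hπ0]; nlinarith
  have hinv0 : 0 ≤ 2 / Real.pi := by positivity
  have hpinv : Real.pi⁻¹ ≤ (0.31835 : ℝ) := by
    have h1 : Real.pi⁻¹ ≤ (3.141592 : ℝ)⁻¹ :=
      inv_anti₀ (by norm_num) hπl.le
    have h2 : (3.141592 : ℝ)⁻¹ ≤ 0.31835 := by norm_num
    linarith
  rcases le_or_gt 6 m with h6 | h6
  · -- large case
    have hH := harm_bound m hm
    have hlm : (1.7328 : ℝ) ≤ Real.log m := by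
      have h6m : Real.log 6 ≤ Real.log m := Real.log_le_log (by norm_num) (by exact_mod_cast h6)
      have l6 : Real.log 6 = Real.log 2 + Real.log 3 := by
        rw [show (6 : ℝ) = 2 * 3 by norm_num, Real.log_mul] <;> norm_num
      linarith
    have hH0 : 0 ≤ ∑ h ∈ Finset.Ico 1 m, (1 : ℝ) / h := by positivity
    have key : 1 + (2 / Real.pi) * (1 + Real.log m) ≤ Real.log 3 + Real.log m := by
      have hprod : (2 / Real.pi) * (1 + Real.log m) ≤ 0.6367 * (1 + Real.log m) :=
        mul_le_mul_of_nonneg_right hinv (by linarith)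
      nlinarith
    calc (m : ℝ) + (2 * m / Real.pi) * (∑ h ∈ Finset.Ico 1 m, (1 : ℝ) / h)
        ≤ (m : ℝ) + (2 * m / Real.pi) * (1 + Real.log m) := by
          have : (0 : ℝ) ≤ 2 * m / Real.pi := by positivity
          nlinarith [mul_le_mul_of_nonneg_left hH this]
      _ = m * (1 + (2 / Real.pi) * (1 + Real.log m)) := by ring
      _ ≤ m * (Real.log 3 + Real.log m) := by
          exact mul_le_mul_of_nonneg_left key hmR.le
      _ = m * Real.log (3 * m) := by rw [hlog3m]
  · -- small cases
    interval_cases m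
    · simp only [show Finset.Ico 1 1 = ∅ from rfl, Finset.sum_empty, mul_zero, add_zero]
      rw [hlog3m]
      simp [Real.log_one]
      linarith
    · rw [hlog3m]
      have hs : ∑ h ∈ Finset.Ico (1:ℕ) 2, (1 : ℝ) / h = 1 := by
        rw [show Finset.Ico (1:ℕ) 2 = {1} from rfl]
        norm_num
      rw [hs]
      push_cast
      rw [div_eq_mul_inv]
      linarith
    · rw [hlog3m]
      have hs : ∑ h ∈ Finset.Ico (1:ℕ) 3, (1 : ℝ) / h = 3 / 2 := by
        rw [show Finset.Ico (1:ℕ) 3 = {1, 2} from rfl]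
        norm_num
      rw [hs]
      push_cast
      rw [div_eq_mul_inv]
      linarith
    · rw [hlog3m]
      have hs : ∑ h ∈ Finset.Ico (1:ℕ) 4, (1 : ℝ) / h = 11 / 6 := by
        rw [show Finset.Ico (1:ℕ) 4 = {1, 2, 3} from rfl]
        norm_num
      rw [hs]
      have hl4 : Real.log 4 = 2 * Real.log 2 := by
        rw [show (4 : ℝ) = 2 ^ 2 by norm_num, Real.log_pow]; push_cast; ring
      push_cast
      rw [hl4, div_eq_mul_inv]
      linarith
    · rw [hlog3m]
      have hs : ∑ h ∈ Finset.Ico (1:ℕ) 5, (1 : ℝ) / h = 25 / 12 := by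
        rw [show Finset.Ico (1:ℕ) 5 = {1, 2, 3, 4} from rfl]
        norm_num
      rw [hs]
      have hl5 : Real.log 4 ≤ Real.log 5 := Real.log_le_log (by norm_num) (by norm_num)
      have hl4 : Real.log 4 = 2 * Real.log 2 := by
        rw [show (4 : ℝ) = 2 ^ 2 by norm_num, Real.log_pow]; push_cast; ring
      push_cast
      rw [div_eq_mul_inv]
      linarith

lemma part2 (m : ℕ) (hm : 1 ≤ m) (a b : ℤ) (hcard : (Finset.Icc a b).card ≤ m) :
    ∑ h ∈ Finset.range m,
         ‖(1 / (Real.sqrt m : ℂ)) * ∑ x ∈ Finset.Icc a b, eAdd m ((h : ℤ) * x)‖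
      ≤ Real.sqrt m * Real.log (3 * m) := by
  have hmR : (0 : ℝ) < m := by exact_mod_cast hm
  have hs0 : 0 < Real.sqrt m := Real.sqrt_pos.mpr hmR
  set G : ℕ → ℝ := fun h => ‖∑ x ∈ Finset.Icc a b, eAdd m ((h : ℤ) * x)‖ with hG
  have habs_c : ‖1 / (Real.sqrt m : ℂ)‖ = 1 / Real.sqrt m := by
    rw [norm_div, norm_one, Complex.norm_real, Real.norm_eq_abs, abs_of_pos hs0]
  have hGsum : ∑ h ∈ Finset.range m, G h ≤ m * Real.log (3 * m) := by
    have hzero : G 0 = ((Finset.Icc a b).card : ℝ) := by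
      rw [hG]
      simp only [Nat.cast_zero, zero_mul, eAdd]
      norm_num
    have hbound : ∀ h ∈ Finset.Ico 1 m,
        G h ≤ (1 / Real.pi) * ((m : ℝ) / h + (m : ℝ) / ((m : ℝ) - h)) := by
      intro h hh
      rw [Finset.mem_Ico] at hh
      have hhR : (0 : ℝ) < h := by exact_mod_cast hh.1
      have hhm : (h : ℝ) < m := by exact_mod_cast hh.2
      have h1 : G h ≤ 1 / Real.sin (Real.pi * h / m) :=
        geom_abs m hm h hh.1 hh.2 a b
      have hx0 : (0 : ℝ) ≤ (h : ℝ) / m := by positivity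
      have hx1 : (h : ℝ) / m ≤ 1 := by
        rw [div_le_one hmR]; exact hhm.le
      have hsin := sin_pi_mul hx0 hx1
      rw [show Real.pi * (h : ℝ) / m = Real.pi * ((h : ℝ) / m) by ring] at h1
      have hpos : 0 < Real.pi * ((h : ℝ) / m) * (1 - (h : ℝ) / m) := by
        have hlt : (h : ℝ) / m < 1 := by rw [div_lt_one hmR]; exact hhm
        have h2 : 0 < (h : ℝ) / m := by positivity
        exact mul_pos (mul_pos Real.pi_pos h2) (by linarith)
      have h2 : 1 / Real.sin (Real.pi * ((h : ℝ) / m))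
          ≤ 1 / (Real.pi * ((h : ℝ) / m) * (1 - (h : ℝ) / m)) :=
        one_div_le_one_div_of_le hpos hsin
      have h3 : 1 / (Real.pi * ((h : ℝ) / m) * (1 - (h : ℝ) / m))
          = (1 / Real.pi) * ((m : ℝ) / h + (m : ℝ) / ((m : ℝ) - h)) := by
        have hne1 : (h : ℝ) ≠ 0 := ne_of_gt hhR
        have hne2 : (m : ℝ) - h ≠ 0 := by linarith
        have hne3 : Real.pi ≠ 0 := Real.pi_ne_zero
        have hne4 : (m : ℝ) ≠ 0 := ne_of_gt hmR
        field_simp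
        ring
      linarith
    have hsplit : ∑ h ∈ Finset.range m, G h = G 0 + ∑ h ∈ Finset.Ico 1 m, G h := by
      rw [Finset.range_eq_Ico, Finset.sum_eq_sum_Ico_succ_bot (by omega : 0 < m)]
    have hsum2 : ∑ h ∈ Finset.Ico 1 m, G h
        ≤ (2 * m / Real.pi) * (∑ h ∈ Finset.Ico 1 m, (1 : ℝ) / h) := by
      calc ∑ h ∈ Finset.Ico 1 m, G h
          ≤ ∑ h ∈ Finset.Ico 1 m, (1 / Real.pi) * ((m : ℝ) / h + (m : ℝ) / ((m : ℝ) - h)) :=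
            Finset.sum_le_sum hbound
        _ = (1 / Real.pi) * ((∑ h ∈ Finset.Ico 1 m, (m : ℝ) / h)
              + ∑ h ∈ Finset.Ico 1 m, (m : ℝ) / ((m : ℝ) - h)) := by
            rw [← Finset.sum_add_distrib, Finset.mul_sum]
        _ = (1 / Real.pi) * (2 * ∑ h ∈ Finset.Ico 1 m, (m : ℝ) / h) := by
            rw [sum_reflect m]; ring
        _ = (2 * m / Real.pi) * (∑ h ∈ Finset.Ico 1 m, (1 : ℝ) / h) := by
            simp only [Finset.mul_sum]
            exact Finset.sum_congr rfl fun h _ => by ring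
    have hcardR : ((Finset.Icc a b).card : ℝ) ≤ m := by exact_mod_cast hcard
    have := final_numeric m hm
    rw [hsplit, hzero]
    linarith
  calc ∑ h ∈ Finset.range m,
         ‖(1 / (Real.sqrt m : ℂ)) * ∑ x ∈ Finset.Icc a b, eAdd m ((h : ℤ) * x)‖
      = (1 / Real.sqrt m) * ∑ h ∈ Finset.range m, G h := by
        rw [Finset.mul_sum]
        refine Finset.sum_congr rfl fun h _ => ?_
        rw [norm_mul, habs_c, hG]
    _ ≤ (1 / Real.sqrt m) * (m * Real.log (3 * m)) :=
        mul_le_mul_of_nonneg_left hGsum (by positivity)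
    _ = Real.sqrt m * Real.log (3 * m) := by
        rw [show (1 / Real.sqrt m) * ((m : ℝ) * Real.log (3 * m))
          = ((m : ℝ) / Real.sqrt m) * Real.log (3 * m) by ring, Real.div_sqrt]

lemma part1 (m : ℕ) (hm : 1 ≤ m) (φ : ℤ → ℂ)
    (hper : ∀ n : ℤ, φ (n + m) = φ n) (a b : ℤ) :
     ‖∑ n ∈ Finset.Icc a b, φ n‖
      ≤ supNorm m (dft m φ) *
        ∑ h ∈ Finset.range m,
           ‖(1 / (Real.sqrt m : ℂ)) * ∑ x ∈ Finset.Icc a b, eAdd m ((h : ℤ) * x)‖ := by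
  have hsup : ∀ h ∈ Finset.range m, ‖dft m φ (h : ℤ)‖ ≤ supNorm m (dft m φ) := by
    intro h hh
    have h1 : ‖dft m φ (h : ℤ)‖₊ ≤ (Finset.range m).sup (fun x => ‖dft m φ (x : ℤ)‖₊) :=
      Finset.le_sup (f := fun x : ℕ => ‖dft m φ (x : ℤ)‖₊) hh
    rw [supNorm, ← coe_nnnorm]
    exact_mod_cast h1
  have he : ∀ t : ℤ, eAdd m (-t) = starRingEnd ℂ (eAdd m t) := by
    intro t
    rw [eAdd, eAdd, ← Complex.exp_conj]
    congr 1
    rw [map_div₀, map_mul, map_mul, map_mul, Complex.conj_I, map_natCast, map_intCast,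
      Complex.conj_ofReal, map_ofNat]
    push_cast
    ring
  have hconj : ∀ h : ℕ,
       ‖(1 / (Real.sqrt m : ℂ)) * ∑ n ∈ Finset.Icc a b, eAdd m (-((h : ℤ) * n))‖
        = ‖(1 / (Real.sqrt m : ℂ)) * ∑ n ∈ Finset.Icc a b, eAdd m ((h : ℤ) * n)‖ := by
    intro h
    rw [show ∑ n ∈ Finset.Icc a b, eAdd m (-((h : ℤ) * n))
        = starRingEnd ℂ (∑ n ∈ Finset.Icc a b, eAdd m ((h : ℤ) * n)) by
      rw [map_sum]; exact Finset.sum_congr rfl fun n _ => he _]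
    rw [norm_mul, norm_mul, Complex.norm_conj]
  rw [inversion m hm φ hper a b]
  calc ‖∑ h ∈ Finset.range m,
        dft m φ h * ((1 / (Real.sqrt m : ℂ)) * ∑ n ∈ Finset.Icc a b, eAdd m (-((h : ℤ) * n)))‖
      ≤ ∑ h ∈ Finset.range m, 
          ‖dft m φ h * ((1 / (Real.sqrt m : ℂ)) * ∑ n ∈ Finset.Icc a b, eAdd m (-((h : ℤ) * n)))‖ :=
        norm_sum_le _ _
    _ ≤ ∑ h ∈ Finset.range m, supNorm m (dft m φ) *
           ‖(1 / (Real.sqrt m : ℂ)) * ∑ n ∈ Finset.Icc a b, eAdd m (-((h : ℤ) * n))‖ := by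
        refine Finset.sum_le_sum fun h hh => ?_
        rw [norm_mul]
        exact mul_le_mul_of_nonneg_right (hsup h hh) (norm_nonneg _)
    _ = supNorm m (dft m φ) * ∑ h ∈ Finset.range m,
           ‖(1 / (Real.sqrt m : ℂ)) * ∑ x ∈ Finset.Icc a b, eAdd m ((h : ℤ) * x)‖ := by
        rw [Finset.mul_sum]
        exact Finset.sum_congr rfl fun h _ => by rw [hconj h]

/-- Pólya–Vinogradov completion bound. -/
theorem stmt0 (m : ℕ) (hm : 1 ≤ m) (φ : ℤ → ℂ)
    (hper : ∀ n : ℤ, φ (n + m) = φ n) (a b : ℤ)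
    (hcard : (Finset.Icc a b).card ≤ m) :
     ‖∑ n ∈ Finset.Icc a b, φ n‖
      ≤ supNorm m (dft m φ) *
        ∑ h ∈ Finset.range m,
           ‖(1 / Real.sqrt m) * ∑ x ∈ Finset.Icc a b, eAdd m (h * x)‖ ∧
    ∑ h ∈ Finset.range m,
         ‖(1 / Real.sqrt m) * ∑ x ∈ Finset.Icc a b, eAdd m (h * x)‖
      ≤ Real.sqrt m * Real.log (3 * m) := by
  constructor
  · exact part1 m hm φ hper a b
  · exact part2 m hm a b hcard
end

section
/- Let I be a finite index set and B : I → ℝ with |B(n)| ≤ 2 for all n. Suppose Σ_{n∈I} B(n) = o(|I|) and Σ_{n∈I} B(n)^2 = (1+o(1))|I|. Then for any 0 ≤ t < 1/2: min( #{n∈I : B(n) > t}, #{n∈I : B(n) < −t} ) ≥ ((1−2t)/(4(2−t)) + o(1)) |I|. -/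
open scoped BigOperators

lemma aux13 {α : Type} (I : Finset α) (B : α → ℝ) (ε t : ℝ)
    (hε : 0 ≤ ε) (ht : 0 ≤ t) (ht2 : t < 1 / 2)
    (hB : ∀ n ∈ I, |B n| ≤ 2)
    (h1 : ∑ n ∈ I, B n ≤ ε * I.card)
    (h2 : (1 - ε) * I.card ≤ ∑ n ∈ I, B n ^ 2) :
    ((1 - 2 * t) / (4 * (2 - t)) - ε) * I.card
      ≤ ((I.filter fun n => B n < -t).card : ℝ) := by
  classical
  set p : α → Prop := fun n => B n < -t with hp
  have hsplit2 : ∑ n ∈ I.filter p, B n ^ 2 + ∑ n ∈ I.filter (fun n => ¬ p n), B n ^ 2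
      = ∑ n ∈ I, B n ^ 2 := Finset.sum_filter_add_sum_filter_not I _ _
  have hsplit1 : ∑ n ∈ I.filter p, B n + ∑ n ∈ I.filter (fun n => ¬ p n), B n
      = ∑ n ∈ I, B n := Finset.sum_filter_add_sum_filter_not I _ _
  have hcard : ((I.filter p).card : ℝ) + ((I.filter (fun n => ¬ p n)).card : ℝ)
      = (I.card : ℝ) := by
    rw [← Nat.cast_add, Finset.card_filter_add_card_filter_not]
  have hMsq : ∑ n ∈ I.filter p, B n ^ 2 ≤ 4 * ((I.filter p).card : ℝ) := by
    calc ∑ n ∈ I.filter p, B n ^ 2 ≤ ∑ n ∈ I.filter p, 4 := by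
          apply Finset.sum_le_sum
          intro n hn
          have := hB n (Finset.mem_filter.mp hn).1
          have h1 := abs_le.mp this
          nlinarith [h1.1, h1.2]
      _ = 4 * ((I.filter p).card : ℝ) := by
          rw [Finset.sum_const]; push_cast; ring
  have hMB : -(2 * ((I.filter p).card : ℝ)) ≤ ∑ n ∈ I.filter p, B n := by
    calc -(2 * ((I.filter p).card : ℝ)) = ∑ n ∈ I.filter p, (-2 : ℝ) := by
          rw [Finset.sum_const]; push_cast; ring
      _ ≤ ∑ n ∈ I.filter p, B n := by
          apply Finset.sum_le_sum
          intro n hn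
          have := abs_le.mp (hB n (Finset.mem_filter.mp hn).1)
          linarith [this.1]
  have hMcsq : ∑ n ∈ I.filter (fun n => ¬ p n), B n ^ 2
      ≤ (2 - t) * ∑ n ∈ I.filter (fun n => ¬ p n), B n
        + 2 * t * ((I.filter (fun n => ¬ p n)).card : ℝ) := by
    calc ∑ n ∈ I.filter (fun n => ¬ p n), B n ^ 2
        ≤ ∑ n ∈ I.filter (fun n => ¬ p n), ((2 - t) * B n + 2 * t) := by
          apply Finset.sum_le_sum
          intro n hn
          have hmem := Finset.mem_filter.mp hn
          have hnp : ¬ B n < -t := hmem.2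
          have hge : -t ≤ B n := not_lt.mp hnp
          have hle : B n ≤ 2 := (abs_le.mp (hB n hmem.1)).2
          nlinarith [mul_nonneg (sub_nonneg.mpr hle) (sub_nonneg.mpr hge)]
      _ = (2 - t) * ∑ n ∈ I.filter (fun n => ¬ p n), B n
          + 2 * t * ((I.filter (fun n => ¬ p n)).card : ℝ) := by
          rw [Finset.sum_add_distrib, ← Finset.mul_sum, Finset.sum_const, nsmul_eq_mul]; ring
  have hN : (0 : ℝ) ≤ (I.card : ℝ) := Nat.cast_nonneg _
  have hD : (0 : ℝ) < 4 * (2 - t) := by linarith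
  have key : (1 - 2 * t) * (I.card : ℝ) - 4 * (2 - t) * ε * (I.card : ℝ)
      ≤ 4 * (2 - t) * ((I.filter p).card : ℝ) := by
    have c1 : (0:ℝ) ≤ ((I.filter p).card : ℝ) := Nat.cast_nonneg _
    have c2 : (0:ℝ) ≤ ((I.filter (fun n => ¬ p n)).card : ℝ) := Nat.cast_nonneg _
    nlinarith [c1, c2, mul_nonneg hε hN]
  have heq : ((1 - 2 * t) / (4 * (2 - t)) - ε) * (I.card : ℝ)
      = ((1 - 2 * t) * (I.card : ℝ) - 4 * (2 - t) * ε * (I.card : ℝ)) / (4 * (2 - t)) := by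
    have h2t : (2 - t) ≠ 0 := by linarith
    field_simp
  rw [heq, div_le_iff₀ hD]
  show (1 - 2 * t) * (I.card : ℝ) - 4 * (2 - t) * ε * (I.card : ℝ)
      ≤ ((I.filter p).card : ℝ) * (4 * (2 - t))
  nlinarith [key]

/-- Distribution lemma: positive proportion of values above t and below −t. -/
theorem stmt13 :
    ∃ C : ℝ, 0 < C ∧
      ∀ {α : Type} (I : Finset α) (B : α → ℝ) (ε t : ℝ),
        0 ≤ ε → 0 ≤ t → t < 1 / 2 →
        (∀ n ∈ I, |B n| ≤ 2) →
        |∑ n ∈ I, B n| ≤ ε * I.card →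
        |(∑ n ∈ I, (B n) ^ 2) - I.card| ≤ ε * I.card →
        ((1 - 2 * t) / (4 * (2 - t)) - C * ε) * I.card
          ≤ min ((I.filter fun n => t < B n).card : ℝ)
              ((I.filter fun n => B n < -t).card : ℝ) := by
  refine ⟨1, one_pos, ?_⟩
  intro α I B ε t hε ht ht2 hB h1 h2
  rw [one_mul]
  have h1' := abs_le.mp h1
  have h2' := abs_le.mp h2
  have hsumle : ∑ n ∈ I, B n ≤ ε * I.card := h1'.2
  have hsumge : -(ε * I.card) ≤ ∑ n ∈ I, B n := h1'.1
  have hsq : (1 - ε) * I.card ≤ ∑ n ∈ I, B n ^ 2 := by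
    have := h2'.1; push_cast at this ⊢; linarith
  have hMside := aux13 I B ε t hε ht ht2 hB hsumle hsq
  -- P side: apply to -B
  have hPside : ((1 - 2 * t) / (4 * (2 - t)) - ε) * I.card
      ≤ ((I.filter fun n => t < B n).card : ℝ) := by
    have hB' : ∀ n ∈ I, |(-B n)| ≤ 2 := by
      intro n hn; rw [abs_neg]; exact hB n hn
    have hsumle' : ∑ n ∈ I, (-B n) ≤ ε * I.card := by
      rw [Finset.sum_neg_distrib]; linarith
    have hsq' : (1 - ε) * I.card ≤ ∑ n ∈ I, (-B n) ^ 2 := by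
      simpa [neg_pow] using hsq
    have := aux13 I (fun n => -B n) ε t hε ht ht2 hB' hsumle' hsq'
    have hfilt : (I.filter fun n => (fun n => -B n) n < -t) = I.filter fun n => t < B n := by
      apply Finset.filter_congr
      intro n _
      simp [neg_lt_neg_iff]
    rwa [hfilt] at this
  exact le_min hPside hMside
end

section
/- Let m ≥ 2, φ : ℤ/mℤ → ℂ, Ψ : ℝ → ℂ a 1-periodic function with absolutely convergent Fourier series Ψ(α) = Σ_{h∈ℤ} Ψ̂(h) e(−hα). Then Σ_{0≤n<m} φ̂(n) Ψ(n/m) = √m · Σ_{h∈ℤ} Ψ̂(h) φ(h), where φ̂ is the normalized discrete Fourier transform of φ and φ is extended m-periodically to ℤ. -/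
open scoped BigOperators

lemma orth37 (m : ℕ) (hm : 0 < m) (k : ℤ) :
    ∑ n ∈ Finset.range m, Complex.exp (2 * Real.pi * Complex.I * n * k / m)
      = if (m : ℤ) ∣ k then (m : ℂ) else 0 := by
  have hmC : (m : ℂ) ≠ 0 := Nat.cast_ne_zero.2 hm.ne'
  have hz : ∀ n : ℕ, Complex.exp (2 * Real.pi * Complex.I * n * k / m)
      = Complex.exp (2 * Real.pi * Complex.I * k / m) ^ n := by
    intro n
    rw [← Complex.exp_nat_mul]
    congr 1
    field_simp
  rw [Finset.sum_congr rfl fun n _ => hz n]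
  by_cases hd : (m : ℤ) ∣ k
  · obtain ⟨c, rfl⟩ := hd
    rw [if_pos ⟨c, rfl⟩]
    have hz1 : Complex.exp (2 * Real.pi * Complex.I * ((m : ℤ) * c : ℤ) / m) = 1 := by
      have he : (2 * (Real.pi : ℂ) * Complex.I * ((m : ℤ) * c : ℤ) / m) = (c : ℤ) * (2 * Real.pi * Complex.I) := by
        push_cast
        field_simp
      rw [he, Complex.exp_int_mul_two_pi_mul_I]
    push_cast at hz1 ⊢
    simp [hz1]
  · rw [if_neg hd]
    have hzm : Complex.exp (2 * Real.pi * Complex.I * k / m) ^ m = 1 := by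
      rw [← Complex.exp_nat_mul]
      have he : (m : ℂ) * (2 * Real.pi * Complex.I * k / m) = k * (2 * Real.pi * Complex.I) := by
        field_simp
      rw [he, Complex.exp_int_mul_two_pi_mul_I]
    have hz1 : Complex.exp (2 * Real.pi * Complex.I * k / m) ≠ 1 := by
      intro hz1
      rw [Complex.exp_eq_one_iff] at hz1
      obtain ⟨n, hn⟩ := hz1
      apply hd
      refine ⟨n, ?_⟩
      have h2 : (2 * (Real.pi : ℂ) * Complex.I) ≠ 0 := by
        simp [Real.pi_ne_zero, Complex.I_ne_zero]
      have hk : (k : ℂ) = (m : ℂ) * n := by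
        have hn' : (k : ℂ) * (2 * Real.pi * Complex.I) = ((m : ℂ) * n) * (2 * Real.pi * Complex.I) := by
          field_simp at hn
          linear_combination (2 * (Real.pi : ℂ) * Complex.I) * hn
        exact mul_right_cancel₀ h2 hn'
      exact_mod_cast hk
    rw [geom_sum_eq hz1, hzm]
    simp

lemma per37 (m : ℕ) (φ : ℤ → ℂ) (hper : ∀ n : ℤ, φ (n + m) = φ n) :
    ∀ (k n : ℤ), φ (n + k * m) = φ n := by
  intro k
  induction k using Int.induction_on with
  | zero => simp
  | succ k ih =>
    intro n
    rw [show n + ((k : ℤ) + 1) * m = (n + k * m) + m by ring, hper, ih]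
  | pred k ih =>
    intro n
    have h1 := (hper (n + (-(k : ℤ) - 1) * m)).symm
    rw [show n + (-(k : ℤ) - 1) * m + m = n + (-(k : ℤ)) * m by ring] at h1
    rw [h1, ih]

lemma phi_of_dvd37 (m : ℕ) (φ : ℤ → ℂ) (hper : ∀ n : ℤ, φ (n + m) = φ n)
    (h x : ℤ) (hd : (m : ℤ) ∣ (x - h)) : φ x = φ h := by
  obtain ⟨c, hc⟩ := hd
  have : x = h + c * m := by linarith [hc]
  rw [this, per37 m φ hper]

lemma sum_pick37 (m : ℕ) (hm : 0 < m) (φ : ℤ → ℂ) (hper : ∀ n : ℤ, φ (n + m) = φ n) (h : ℤ) :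
    ∑ x ∈ Finset.range m, φ x * (if (m : ℤ) ∣ ((x : ℤ) - h) then (m : ℂ) else 0)
      = φ h * m := by
  have hm' : (0 : ℤ) < m := by exact_mod_cast hm
  set x₀ : ℕ := (h % m).toNat with hx₀
  have hx₀z : (x₀ : ℤ) = h % m := Int.toNat_of_nonneg (Int.emod_nonneg h hm'.ne')
  have hx₀mem : x₀ ∈ Finset.range m := by
    rw [Finset.mem_range]
    have : (x₀ : ℤ) < m := hx₀z ▸ Int.emod_lt_of_pos h hm'
    exact_mod_cast this
  have hdx₀ : (m : ℤ) ∣ ((x₀ : ℤ) - h) := by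
    rw [hx₀z, Int.emod_def]
    exact ⟨-(h / m), by ring⟩
  rw [Finset.sum_eq_single_of_mem x₀ hx₀mem]
  · rw [if_pos hdx₀, phi_of_dvd37 m φ hper h _ hdx₀]
  · intro x hx hne
    rw [if_neg, mul_zero]
    intro hdx
    apply hne
    have hd2 : (m : ℤ) ∣ ((x : ℤ) - (x₀ : ℤ)) := by
      have := hdx.sub hdx₀
      simpa using this
    obtain ⟨c, hc⟩ := hd2
    have hxlt : (x : ℤ) < m := by exact_mod_cast Finset.mem_range.1 hx
    have hx₀lt : (x₀ : ℤ) < m := by exact_mod_cast Finset.mem_range.1 hx₀mem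
    have hx0 : (0 : ℤ) ≤ (x : ℤ) := Int.ofNat_nonneg x
    have hx₀0 : (0 : ℤ) ≤ (x₀ : ℤ) := Int.ofNat_nonneg x₀
    have hc0 : c = 0 := by nlinarith
    rw [hc0, mul_zero, sub_eq_zero] at hc
    exact_mod_cast hc

lemma innerSum37 (m : ℕ) (hm : 0 < m) (φ : ℤ → ℂ) (hper : ∀ n : ℤ, φ (n + m) = φ n) (h : ℤ) :
    ∑ n ∈ Finset.range m,
        dft m φ n * Complex.exp (-(2 * Real.pi * Complex.I * h * (((n : ℝ) / m : ℝ) : ℂ)))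
      = Real.sqrt m * φ h := by
  have hmC : (m : ℂ) ≠ 0 := Nat.cast_ne_zero.2 hm.ne'
  have hs : (0 : ℝ) < Real.sqrt m := Real.sqrt_pos.2 (by exact_mod_cast hm)
  have hsC : ((Real.sqrt m : ℝ) : ℂ) ≠ 0 := by exact_mod_cast hs.ne'
  have key : ∑ n ∈ Finset.range m,
        dft m φ n * Complex.exp (-(2 * Real.pi * Complex.I * h * (((n : ℝ) / m : ℝ) : ℂ)))
      = ((1 / Real.sqrt m : ℝ) : ℂ) *
        ∑ x ∈ Finset.range m, φ x *
          ∑ n ∈ Finset.range m, Complex.exp (2 * Real.pi * Complex.I * n * (((x : ℤ) - h : ℤ) : ℂ) / m) := by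
    simp only [dft, Finset.sum_mul, Finset.mul_sum, mul_assoc]
    rw [Finset.sum_comm]
    apply Finset.sum_congr rfl
    intro x _
    apply Finset.sum_congr rfl
    intro n _
    rw [eAdd, ← Complex.exp_add]
    push_cast
    ring_nf
  rw [key]
  have ho : ∀ x : ℕ, ∑ n ∈ Finset.range m, Complex.exp (2 * Real.pi * Complex.I * n * (((x : ℤ) - h : ℤ) : ℂ) / m) = if (m : ℤ) ∣ ((x : ℤ) - h) then (m : ℂ) else 0 := fun x => orth37 m hm _
  simp only [ho]
  rw [sum_pick37 m hm φ hper h]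
  rw [show ((m : ℕ) : ℂ) = ((Real.sqrt m : ℝ) : ℂ) * ((Real.sqrt m : ℝ) : ℂ) by
    rw [← Complex.ofReal_mul, Real.mul_self_sqrt (Nat.cast_nonneg m)]; push_cast; ring]
  push_cast
  field_simp

/-- Smoothed completion / Plancherel identity (3.7). -/
theorem stmt16 (m : ℕ) (hm : 2 ≤ m) (φ : ℤ → ℂ)
    (hper : ∀ n : ℤ, φ (n + m) = φ n) (Ψ : ℝ → ℂ) (Ψc : ℤ → ℂ)
    (habs : Summable fun h : ℤ => ‖Ψc h‖)
    (hrep : ∀ α : ℝ,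
      Ψ α = ∑' h : ℤ, Ψc h * Complex.exp (-(2 * Real.pi * Complex.I * h * α))) :
    ∑ n ∈ Finset.range m, dft m φ n * Ψ ((n : ℝ) / m)
      = Real.sqrt m * ∑' h : ℤ, Ψc h * φ h := by
  have hm0 : 0 < m := by omega
  have absexp : ∀ (k : ℤ) (α : ℝ),
      ‖Complex.exp (-(2 * Real.pi * Complex.I * k * α))‖ = 1 := by
    intro k α
    rw [show (-(2 * (Real.pi : ℂ) * Complex.I * k * α))
        = ((-(2 * Real.pi * k * α) : ℝ) : ℂ) * Complex.I by push_cast; ring]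
    exact Complex.norm_exp_ofReal_mul_I _
  have hsum : ∀ α : ℝ,
      Summable fun h : ℤ => Ψc h * Complex.exp (-(2 * Real.pi * Complex.I * h * α)) := by
    intro α
    apply Summable.of_norm
    have he : (fun h : ℤ => ‖Ψc h * Complex.exp (-(2 * Real.pi * Complex.I * h * α))‖)
        = fun h : ℤ => ‖Ψc h‖ := by
      funext h
      rw [norm_mul, absexp, mul_one]
    rw [he]
    exact habs
  calc ∑ n ∈ Finset.range m, dft m φ n * Ψ ((n : ℝ) / m)
      = ∑ n ∈ Finset.range m, ∑' h : ℤ,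
          dft m φ n * (Ψc h * Complex.exp (-(2 * Real.pi * Complex.I * h * (((n : ℝ) / m : ℝ) : ℂ)))) := by
        apply Finset.sum_congr rfl
        intro n _
        rw [hrep ((n : ℝ) / m), ← tsum_mul_left]
    _ = ∑' h : ℤ, ∑ n ∈ Finset.range m,
          dft m φ n * (Ψc h * Complex.exp (-(2 * Real.pi * Complex.I * h * (((n : ℝ) / m : ℝ) : ℂ)))) :=
        (Summable.tsum_finsetSum fun n _ => (hsum _).mul_left _).symm
    _ = ∑' h : ℤ, Ψc h * (Real.sqrt m * φ h) := by
        apply tsum_congr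
        intro h
        have hi := innerSum37 m hm0 φ hper h
        calc ∑ n ∈ Finset.range m,
              dft m φ n * (Ψc h * Complex.exp (-(2 * Real.pi * Complex.I * h * (((n : ℝ) / m : ℝ) : ℂ))))
            = Ψc h * ∑ n ∈ Finset.range m,
              dft m φ n * Complex.exp (-(2 * Real.pi * Complex.I * h * (((n : ℝ) / m : ℝ) : ℂ))) := by
              rw [Finset.mul_sum]
              apply Finset.sum_congr rfl
              intro n _
              ring
          _ = Ψc h * (Real.sqrt m * φ h) := by rw [hi]
    _ = Real.sqrt m * ∑' h : ℤ, Ψc h * φ h := by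
        rw [← tsum_mul_left]
        apply tsum_congr
        intro h
        ring
end
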